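/- Let K be a compact metric space, f : K → K continuous, and μ an ergodic f-invariant Borel probability measure on K. Then for μ-almost every point x in K, the sequence of empirical measures (1/n) · Σ_{k=0}^{n-1} δ(f^k(x)) converges weakly-* to μ. -/

import Mathlib

open MeasureTheory Filter Topology Set

set_option linter.unusedSectionVars false
set_option maxHeartbeats 1000000

namespace BirkhoffProofAux


/-! ### Sequence helpers -/

lemma bddu {u : ℕ → ℝ} {C : ℝ} (h : ∀ n, |u n| ≤ C) :
    IsBoundedUnder (· ≤ ·) atTop u :=
  isBoundedUnder_of_eventually_le (a := C) (Eventually.of_forall fun n => (abs_le.1 (h n)).2)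

lemma bddl {u : ℕ → ℝ} {C : ℝ} (h : ∀ n, |u n| ≤ C) :
    IsBoundedUnder (· ≥ ·) atTop u :=
  isBoundedUnder_of_eventually_ge (a := -C) (Eventually.of_forall fun n => (abs_le.1 (h n)).1)

lemma limsup_add_const (u : ℕ → ℝ) (c : ℝ) {C : ℝ} (h : ∀ n, |u n| ≤ C) :
    limsup (fun n => u n + c) atTop = limsup u atTop + c := by
  have h2 : ∀ n, |u n + c| ≤ C + |c| := fun n =>
    (abs_add_le _ _).trans (add_le_add (h n) le_rfl)
  have := (OrderIso.addRight c).limsup_apply (u := u) (f := atTop) (bddu h)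
    ((bddl h).isCoboundedUnder_le) (bddu h2) ((bddl h2).isCoboundedUnder_le)
  simpa using this.symm

lemma liminf_add_const (u : ℕ → ℝ) (c : ℝ) {C : ℝ} (h : ∀ n, |u n| ≤ C) :
    liminf (fun n => u n + c) atTop = liminf u atTop + c := by
  have h2 : ∀ n, |u n + c| ≤ C + |c| := fun n =>
    (abs_add_le _ _).trans (add_le_add (h n) le_rfl)
  have := (OrderIso.addRight c).liminf_apply (u := u) (f := atTop) (bddl h)
    ((bddu h).isCoboundedUnder_ge) (bddl h2) ((bddu h2).isCoboundedUnder_ge)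
  simpa using this.symm

lemma limsup_le_of_sub_tendsto {u v : ℕ → ℝ} {C : ℝ} (hu : ∀ n, |u n| ≤ C)
    (hv : ∀ n, |v n| ≤ C) (h : Tendsto (fun n => u n - v n) atTop (𝓝 0)) :
    limsup u atTop ≤ limsup v atTop := by
  by_contra hlt
  push_neg at hlt
  set ε := (limsup u atTop - limsup v atTop) / 2 with hε
  have hεpos : 0 < ε := by simp only [hε]; linarith
  have hev : ∀ᶠ n in atTop, u n ≤ v n + ε := by
    filter_upwards [h.eventually_lt_const hεpos] with n hn
    linarith
  have h1 : limsup u atTop ≤ limsup (fun n => v n + ε) atTop :=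
    limsup_le_limsup hev ((bddl hu).isCoboundedUnder_le)
      (bddu (C := C + |ε|) fun n => (abs_add_le _ _).trans (add_le_add (hv n) le_rfl))
  rw [limsup_add_const v ε hv] at h1
  simp only [hε] at h1
  linarith

lemma limsup_congr_of_sub_tendsto {u v : ℕ → ℝ} {C : ℝ} (hu : ∀ n, |u n| ≤ C)
    (hv : ∀ n, |v n| ≤ C) (h : Tendsto (fun n => u n - v n) atTop (𝓝 0)) :
    limsup u atTop = limsup v atTop := by
  refine le_antisymm (limsup_le_of_sub_tendsto hu hv h) (limsup_le_of_sub_tendsto hv hu ?_)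
  have : (fun n => v n - u n) = fun n => -(u n - v n) := by ext n; ring
  rw [this]
  simpa using h.neg

lemma le_liminf_of_sub_tendsto {u v : ℕ → ℝ} {C : ℝ} (hu : ∀ n, |u n| ≤ C)
    (hv : ∀ n, |v n| ≤ C) (h : Tendsto (fun n => u n - v n) atTop (𝓝 0)) :
    liminf v atTop ≤ liminf u atTop := by
  by_contra hlt
  push_neg at hlt
  set ε := (liminf v atTop - liminf u atTop) / 2 with hε
  have hεpos : 0 < ε := by simp only [hε]; linarith
  have hev : ∀ᶠ n in atTop, v n - ε ≤ u n := by
    filter_upwards [h.eventually_const_lt (neg_neg_iff_pos.2 hεpos)] with n hn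
    linarith
  have h1 : liminf (fun n => v n + -ε) atTop ≤ liminf u atTop := by
    refine liminf_le_liminf (by simpa [sub_eq_add_neg] using hev)
      (bddl (C := C + |-ε|) fun n => (abs_add_le _ _).trans (add_le_add (hv n) le_rfl))
      ((bddu hu).isCoboundedUnder_ge)
  rw [liminf_add_const v (-ε) hv] at h1
  simp only [hε] at h1
  linarith

lemma liminf_congr_of_sub_tendsto {u v : ℕ → ℝ} {C : ℝ} (hu : ∀ n, |u n| ≤ C)
    (hv : ∀ n, |v n| ≤ C) (h : Tendsto (fun n => u n - v n) atTop (𝓝 0)) :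
    liminf u atTop = liminf v atTop := by
  refine le_antisymm ?_ (le_liminf_of_sub_tendsto hu hv h)
  refine le_liminf_of_sub_tendsto (v := u) hv hu ?_
  have : (fun n => v n - u n) = fun n => -(u n - v n) := by ext n; ring
  rw [this]
  simpa using h.neg

variable {K : Type*} [MetricSpace K] [CompactSpace K] [MeasurableSpace K] [BorelSpace K]

/-- Birkhoff sums. -/
noncomputable def S (f : K → K) (g : K → ℝ) (n : ℕ) (x : K) : ℝ :=
  ∑ k ∈ Finset.range n, g (f^[k] x)

lemma S_succ (f : K → K) (g : K → ℝ) (n : ℕ) (x : K) :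
    S f g (n + 1) x = g x + S f g n (f x) := by
  simp only [S, Finset.sum_range_succ' (fun k => g (f^[k] x)) n,
    Function.iterate_succ_apply, Function.iterate_zero_apply]
  ring

lemma S_cont {f : K → K} {g : K → ℝ} (hf : Continuous f) (hg : Continuous g) (n : ℕ) :
    Continuous (S f g n) := by
  refine continuous_finset_sum _ fun k _ => hg.comp ?_
  exact hf.iterate k

/-- Running maxima `max (0, S₁, …, Sₙ)`. -/
noncomputable def M (f : K → K) (g : K → ℝ) : ℕ → K → ℝ
  | 0 => fun _ => 0
  | n + 1 => fun x => max 0 (g x + M f g n (f x))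

lemma M_nonneg (f : K → K) (g : K → ℝ) (n : ℕ) (x : K) : 0 ≤ M f g n x := by
  cases n with
  | zero => exact le_refl _
  | succ n => exact le_max_left _ _

lemma M_cont {f : K → K} {g : K → ℝ} (hf : Continuous f) (hg : Continuous g) (n : ℕ) :
    Continuous (M f g n) := by
  induction n with
  | zero => exact continuous_const
  | succ n ih => exact continuous_const.max (hg.add (ih.comp hf))

lemma M_mono (f : K → K) (g : K → ℝ) (n : ℕ) (x : K) : M f g n x ≤ M f g (n + 1) x := by
  induction n generalizing x with
  | zero => exact M_nonneg f g 1 x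
  | succ n ih =>
    exact max_le_max le_rfl (add_le_add le_rfl (ih (f x)))

lemma M_ge_S (f : K → K) (g : K → ℝ) (n : ℕ) (x : K) : S f g n x ≤ M f g n x := by
  induction n generalizing x with
  | zero => simp [S, M]
  | succ n ih =>
    rw [S_succ]
    exact le_trans (add_le_add le_rfl (ih (f x))) (le_max_right _ _)

lemma M_succ_eq {f : K → K} {g : K → ℝ} (n : ℕ) (x : K) (h : 0 < M f g (n + 1) x) :
    M f g (n + 1) x = g x + M f g n (f x) := by
  have he : M f g (n + 1) x = max 0 (g x + M f g n (f x)) := rfl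
  rw [he] at h ⊢
  rcases le_or_gt (g x + M f g n (f x)) 0 with h1 | h1
  · rw [max_eq_left h1] at h; exact absurd h (lt_irrefl _)
  · exact max_eq_right h1.le

lemma M_exists_S {f : K → K} {g : K → ℝ} (n : ℕ) (x : K) (h : 0 < M f g n x) :
    ∃ k, M f g n x ≤ S f g (k + 1) x := by
  induction n generalizing x with
  | zero => exact absurd h (by simp [M])
  | succ n ih =>
    have hM : M f g (n + 1) x = g x + M f g n (f x) := M_succ_eq n x h
    rcases lt_or_ge 0 (M f g n (f x)) with hpos | hle
    · obtain ⟨k, hk⟩ := ih (f x) hpos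
      exact ⟨k + 1, by rw [hM, S_succ]; exact add_le_add le_rfl hk⟩
    · have : M f g n (f x) = 0 := le_antisymm hle (M_nonneg f g n (f x))
      exact ⟨0, by rw [hM, this, add_zero]; simp [S]⟩

lemma cont_integrable {μ : Measure K} [IsFiniteMeasure μ] {h : K → ℝ} (hh : Continuous h) :
    Integrable h μ := by
  obtain ⟨C, hC⟩ := isCompact_univ.exists_bound_of_continuousOn hh.continuousOn
  exact ⟨hh.aestronglyMeasurable,
    HasFiniteIntegral.of_bounded (C := C) (Eventually.of_forall fun x => hC x (mem_univ x))⟩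

/-- **Maximal ergodic theorem**: the integral of `g` over the set where some Birkhoff sum
is positive is nonnegative. -/
lemma maximal {f : K → K} {g : K → ℝ} (hf : Continuous f) (hg : Continuous g)
    {μ : Measure K} [IsProbabilityMeasure μ] (hfm : MeasurePreserving f μ μ) :
    0 ≤ ∫ x in {x | ∃ n, 0 < M f g n x}, g x ∂μ := by
  set E : ℕ → Set K := fun n => {x | 0 < M f g n x} with hE
  have hEopen : ∀ n, IsOpen (E n) := fun n => isOpen_lt continuous_const (M_cont hf hg n)
  have hEmeas : ∀ n, MeasurableSet (E n) := fun n => (hEopen n).measurableSet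
  have hEmono : Monotone E := by
    refine monotone_nat_of_le_succ fun n x hx => lt_of_lt_of_le hx (M_mono f g n x)
  have hMint : ∀ n, Integrable (M f g n) μ := fun n => cont_integrable (M_cont hf hg n)
  have hgint : Integrable g μ := cont_integrable hg
  have hMfint : ∀ n, Integrable (fun x => M f g n (f x)) μ :=
    fun n => cont_integrable ((M_cont hf hg n).comp hf)
  have hMf_eq : ∀ n, ∫ x, M f g n (f x) ∂μ = ∫ x, M f g n x ∂μ := by
    intro n
    rw [← hfm.map_eq, integral_map hfm.measurable.aemeasurable
      (M_cont hf hg n).aestronglyMeasurable, hfm.map_eq]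
  have step : ∀ n, 0 ≤ ∫ x in E n, g x ∂μ := by
    intro n
    cases n with
    | zero =>
      have : E 0 = ∅ := by ext x; simp [hE, M]
      simp [this]
    | succ n =>
      have key : ∀ x ∈ E (n + 1), M f g (n + 1) x - M f g n (f x) ≤ g x := by
        intro x hx
        have hM : M f g (n + 1) x = g x + M f g n (f x) := M_succ_eq n x hx
        rw [hM]; ring_nf; exact le_rfl
      have h1 : ∫ x in E (n+1), (M f g (n+1) x - M f g n (f x)) ∂μ ≤ ∫ x in E (n+1), g x ∂μ :=
        setIntegral_mono_on (((hMint (n+1)).sub (hMfint n)).integrableOn)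
          hgint.integrableOn (hEmeas (n+1)) key
      have h2 : ∫ x in E (n+1), (M f g (n+1) x - M f g n (f x)) ∂μ
          = ∫ x in E (n+1), M f g (n+1) x ∂μ - ∫ x in E (n+1), M f g n (f x) ∂μ :=
        integral_sub (hMint (n+1)).integrableOn (hMfint n).integrableOn
      have h3 : ∫ x in E (n+1), M f g (n+1) x ∂μ = ∫ x, M f g (n+1) x ∂μ := by
        rw [← integral_add_compl (hEmeas (n+1)) (hMint (n+1))]
        have : ∫ x in (E (n+1))ᶜ, M f g (n+1) x ∂μ = 0 := by
          refine setIntegral_eq_zero_of_forall_eq_zero fun x hx => ?_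
          exact le_antisymm (not_lt.1 hx) (M_nonneg f g (n+1) x)
        rw [this, add_zero]
      have h4 : ∫ x in E (n+1), M f g n (f x) ∂μ ≤ ∫ x, M f g n (f x) ∂μ :=
        setIntegral_le_integral (hMfint n)
          (Eventually.of_forall fun x => M_nonneg f g n (f x))
      have h5 : ∫ x, M f g n x ∂μ ≤ ∫ x, M f g (n+1) x ∂μ :=
        integral_mono (hMint n) (hMint (n+1)) (M_mono f g n)
      have := hMf_eq n
      linarith
  have hunion : {x | ∃ n, 0 < M f g n x} = ⋃ n, E n := by
    ext x; simp [hE]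
  rw [hunion]
  have htend := tendsto_setIntegral_of_monotone hEmeas hEmono hgint.integrableOn
  exact ge_of_tendsto' htend step

/-- **Pointwise Birkhoff ergodic theorem** for continuous functions. -/
theorem birkhoff_ae (f : K → K) (hf : Continuous f) (μ : Measure K) [IsProbabilityMeasure μ]
    (herg : Ergodic f μ) (g : K → ℝ) (hg : Continuous g) :
    ∀ᵐ x ∂μ, Tendsto (fun n : ℕ => S f g n x / n) atTop (𝓝 (∫ z, g z ∂μ)) := by
  have hfm : MeasurePreserving f μ μ := herg.toMeasurePreserving
  obtain ⟨C₀, hC₀⟩ := isCompact_univ.exists_bound_of_continuousOn hg.continuousOn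
  set C : ℝ := max C₀ 0 with hCdef
  have hC : ∀ x, |g x| ≤ C := fun x => le_trans (hC₀ x (mem_univ x)) (le_max_left _ _)
  have hC0 : 0 ≤ C := le_max_right _ _
  -- bounds on Birkhoff sums and averages
  have hSabs : ∀ (n : ℕ) (x : K), |S f g n x| ≤ n * C := by
    intro n x
    calc |S f g n x| ≤ ∑ k ∈ Finset.range n, |g (f^[k] x)| :=
          Finset.abs_sum_le_sum_abs _ _
      _ ≤ (Finset.range n).card • C := Finset.sum_le_card_nsmul _ _ C fun k _ => hC _
      _ = n * C := by rw [Finset.card_range, nsmul_eq_mul]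
  have habs : ∀ (x : K) (n : ℕ), |S f g n x / n| ≤ C := by
    intro x n
    cases n with
    | zero => simp [S, hC0]
    | succ m =>
      rw [abs_div, abs_of_nonneg (Nat.cast_nonneg (m+1) : (0:ℝ) ≤ (m+1:ℕ))]
      rw [div_le_iff₀ (by positivity)]
      rw [mul_comm]
      exact hSabs (m+1) x
  -- invariance of limsup / liminf of Birkhoff averages
  have hsub : ∀ x, Tendsto (fun n : ℕ => S f g n (f x) / n - S f g (n+1) x / ((n+1 : ℕ) : ℝ))
      atTop (𝓝 0) := by
    intro x
    refine squeeze_zero_norm' ?_ (tendsto_const_div_atTop_nhds_zero_nat (2 * C + |g x|))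
    filter_upwards [eventually_ge_atTop 1] with n hn
    have hn1 : (1:ℝ) ≤ (n:ℝ) := by exact_mod_cast hn
    have hnpos : (0:ℝ) < n := by linarith
    have hnp1 : (0:ℝ) < (n:ℝ) + 1 := by linarith
    set a : ℝ := S f g (n+1) x with ha
    have hSval : S f g n (f x) = a - g x := by rw [ha, S_succ]; ring
    have hcast : ((n+1 : ℕ) : ℝ) = (n:ℝ) + 1 := by push_cast; ring
    have hkey : S f g n (f x) / n - a / ((n:ℝ)+1)
        = (a - g x * ((n:ℝ)+1)) / ((n:ℝ) * ((n:ℝ)+1)) := by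
      rw [hSval]; field_simp; ring
    rw [Real.norm_eq_abs, hcast, hkey, abs_div,
      abs_of_pos (show (0:ℝ) < (n:ℝ) * ((n:ℝ)+1) by positivity)]
    have hnum : |a - g x * ((n:ℝ)+1)| ≤ ((n:ℝ)+1) * C + |g x| * ((n:ℝ)+1) := by
      calc |a - g x * ((n:ℝ)+1)| ≤ |a| + |g x * ((n:ℝ)+1)| := abs_sub _ _
        _ ≤ ((n:ℝ)+1) * C + |g x| * ((n:ℝ)+1) := by
            rw [abs_mul, abs_of_pos hnp1]
            exact add_le_add (by exact_mod_cast hSabs (n+1) x) le_rfl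
    rw [div_le_div_iff₀ (by positivity) hnpos]
    calc |a - g x * ((n:ℝ)+1)| * n ≤ (((n:ℝ)+1) * C + |g x| * ((n:ℝ)+1)) * n :=
          mul_le_mul_of_nonneg_right hnum hnpos.le
      _ ≤ (2 * C + |g x|) * ((n:ℝ) * ((n:ℝ)+1)) := by nlinarith [mul_nonneg hC0 (mul_nonneg hnpos.le hnp1.le)]
  have hinv_limsup : ∀ x, limsup (fun n : ℕ => S f g n (f x) / n) atTop
      = limsup (fun n : ℕ => S f g n x / n) atTop := by
    intro x
    have h1 : limsup (fun n : ℕ => S f g n (f x) / n) atTop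
        = limsup (fun n : ℕ => S f g (n+1) x / ((n+1 : ℕ) : ℝ)) atTop :=
      limsup_congr_of_sub_tendsto (habs (f x)) (fun n => habs x (n+1)) (hsub x)
    rw [h1]
    exact limsup_nat_add (fun n : ℕ => S f g n x / n) 1
  have hinv_liminf : ∀ x, liminf (fun n : ℕ => S f g n (f x) / n) atTop
      = liminf (fun n : ℕ => S f g n x / n) atTop := by
    intro x
    have h1 : liminf (fun n : ℕ => S f g n (f x) / n) atTop
        = liminf (fun n : ℕ => S f g (n+1) x / ((n+1 : ℕ) : ℝ)) atTop :=
      liminf_congr_of_sub_tendsto (habs (f x)) (fun n => habs x (n+1)) (hsub x)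
    rw [h1]
    exact liminf_nat_add (fun n : ℕ => S f g n x / n) 1
  have hAmeas : ∀ n : ℕ, Measurable (fun x => S f g n x / n) :=
    fun n => ((S_cont hf hg n).measurable).div_const _
  -- integral of g minus a constant
  have hsum_sub : ∀ (q : ℝ) (n : ℕ) (x : K),
      S f (fun z => g z - q) n x = S f g n x - n * q := by
    intro q n x
    simp only [S, Finset.sum_sub_distrib, Finset.sum_const, Finset.card_range, nsmul_eq_mul]
  have hint_sub : ∀ q : ℝ, ∫ x, (g x - q) ∂μ = (∫ z, g z ∂μ) - q := by
    intro q
    rw [integral_sub (cont_integrable hg) (integrable_const q), integral_const]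
    simp [measure_univ]
  -- upper bound for limsup
  have key_limsup : ∀ q : ℚ, (∫ z, g z ∂μ) < q →
      ∀ᵐ x ∂μ, limsup (fun n : ℕ => S f g n x / n) atTop ≤ q := by
    intro q hq
    set s : Set K := {x | (q:ℝ) < limsup (fun n : ℕ => S f g n x / n) atTop} with hs
    have hsmeas : MeasurableSet s :=
      measurableSet_lt measurable_const (Measurable.limsup hAmeas)
    have hsinv : f ⁻¹' s = s := by
      ext x
      simp only [hs, mem_preimage, mem_setOf_eq, hinv_limsup x]
    rcases herg.toPreErgodic.ae_mem_or_ae_notMem hsmeas hsinv with hmem | hnmem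
    · exfalso
      set g' : K → ℝ := fun z => g z - q with hg'def
      have hg' : Continuous g' := hg.sub continuous_const
      have hsubE : ∀ x ∈ s, x ∈ {x | ∃ n, 0 < M f g' n x} := by
        intro x hx
        have hfreq : ∃ᶠ n in atTop, (q:ℝ) < S f g n x / n :=
          frequently_lt_of_lt_limsup ((bddl (habs x)).isCoboundedUnder_le) hx
        obtain ⟨n, hn1, hqn⟩ := frequently_atTop.1 hfreq 1
        have hnpos : (0:ℝ) < n := by exact_mod_cast hn1
        have hS : (q:ℝ) * n < S f g n x := (lt_div_iff₀ hnpos).1 hqn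
        have hSpos : 0 < S f g' n x := by
          rw [hsum_sub (q:ℝ) n x]; nlinarith
        exact ⟨n, lt_of_lt_of_le hSpos (M_ge_S f g' n x)⟩
      have hae : ∀ᵐ x ∂μ, x ∈ {x | ∃ n, 0 < M f g' n x} := hmem.mono hsubE
      have h0 := maximal hf hg' hfm (μ := μ)
      rw [Measure.restrict_eq_self_of_ae_mem hae] at h0
      rw [show (fun x => g' x) = fun x => g x - (q:ℝ) from rfl] at h0
      rw [hint_sub (q:ℝ)] at h0
      linarith
    · filter_upwards [hnmem] with x hx
      exact not_lt.1 hx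
  -- lower bound for liminf
  have key_liminf : ∀ q : ℚ, (q:ℝ) < (∫ z, g z ∂μ) →
      ∀ᵐ x ∂μ, (q:ℝ) ≤ liminf (fun n : ℕ => S f g n x / n) atTop := by
    intro q hq
    set s : Set K := {x | liminf (fun n : ℕ => S f g n x / n) atTop < (q:ℝ)} with hs
    have hsmeas : MeasurableSet s :=
      measurableSet_lt (Measurable.liminf hAmeas) measurable_const
    have hsinv : f ⁻¹' s = s := by
      ext x
      simp only [hs, mem_preimage, mem_setOf_eq, hinv_liminf x]
    rcases herg.toPreErgodic.ae_mem_or_ae_notMem hsmeas hsinv with hmem | hnmem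
    · exfalso
      set g' : K → ℝ := fun z => (q:ℝ) - g z with hg'def
      have hg' : Continuous g' := continuous_const.sub hg
      have hsum' : ∀ (n : ℕ) (x : K), S f g' n x = n * q - S f g n x := by
        intro n x
        simp only [hg'def, S, Finset.sum_sub_distrib, Finset.sum_const, Finset.card_range,
          nsmul_eq_mul]
      have hsubE : ∀ x ∈ s, x ∈ {x | ∃ n, 0 < M f g' n x} := by
        intro x hx
        have hfreq : ∃ᶠ n in atTop, S f g n x / n < (q:ℝ) :=
          frequently_lt_of_liminf_lt ((bddu (habs x)).isCoboundedUnder_ge) hx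
        obtain ⟨n, hn1, hqn⟩ := frequently_atTop.1 hfreq 1
        have hnpos : (0:ℝ) < n := by exact_mod_cast hn1
        have hS : S f g n x < (q:ℝ) * n := (div_lt_iff₀ hnpos).1 hqn
        have hSpos : 0 < S f g' n x := by rw [hsum' n x]; nlinarith
        exact ⟨n, lt_of_lt_of_le hSpos (M_ge_S f g' n x)⟩
      have hae : ∀ᵐ x ∂μ, x ∈ {x | ∃ n, 0 < M f g' n x} := hmem.mono hsubE
      have h0 := maximal hf hg' hfm (μ := μ)
      rw [Measure.restrict_eq_self_of_ae_mem hae] at h0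
      have hint' : ∫ x, g' x ∂μ = (q:ℝ) - ∫ z, g z ∂μ := by
        rw [show (fun x => g' x) = fun x => (q:ℝ) - g x from rfl]
        rw [integral_sub (integrable_const _) (cont_integrable hg), integral_const]
        simp [measure_univ]
      rw [hint'] at h0
      linarith
    · filter_upwards [hnmem] with x hx
      exact not_lt.1 hx
  -- combine over rationals
  have hup : ∀ᵐ x ∂μ, limsup (fun n : ℕ => S f g n x / n) atTop ≤ ∫ z, g z ∂μ := by
    have hall : ∀ᵐ x ∂μ, ∀ q : ℚ, (∫ z, g z ∂μ) < q →
        limsup (fun n : ℕ => S f g n x / n) atTop ≤ q := by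
      rw [ae_all_iff]
      intro q
      by_cases h : (∫ z, g z ∂μ) < q
      · exact (key_limsup q h).mono fun x hx _ => hx
      · exact ae_of_all _ fun x hq => absurd hq h
    filter_upwards [hall] with x hx
    by_contra hlt
    push_neg at hlt
    obtain ⟨q, hq1, hq2⟩ := exists_rat_btwn hlt
    exact absurd (hx q hq1) (not_le.2 hq2)
  have hdown : ∀ᵐ x ∂μ, (∫ z, g z ∂μ) ≤ liminf (fun n : ℕ => S f g n x / n) atTop := by
    have hall : ∀ᵐ x ∂μ, ∀ q : ℚ, (q:ℝ) < (∫ z, g z ∂μ) →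
        (q:ℝ) ≤ liminf (fun n : ℕ => S f g n x / n) atTop := by
      rw [ae_all_iff]
      intro q
      by_cases h : (q:ℝ) < (∫ z, g z ∂μ)
      · exact (key_liminf q h).mono fun x hx _ => hx
      · exact ae_of_all _ fun x hq => absurd hq h
    filter_upwards [hall] with x hx
    by_contra hlt
    push_neg at hlt
    obtain ⟨q, hq1, hq2⟩ := exists_rat_btwn hlt
    exact absurd (hx q hq2) (not_le.2 hq1)
  filter_upwards [hup, hdown] with x h1 h2
  exact tendsto_of_le_liminf_of_limsup_le h2 h1 (bddu (habs x)) (bddl (habs x))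

end BirkhoffProofAux

open BirkhoffProofAux


/-- Birkhoff ergodic theorem for empirical measures: if `μ` is an ergodic
`f`-invariant Borel probability measure on a compact metric space `K`, then for `μ`-a.e. `x`
the empirical measures `(1/n) ∑_{k<n} δ(f^k x)` converge weakly-* to `μ`, i.e. the Birkhoff
averages of every continuous function converge to its integral. -/
theorem stmt0 {K : Type*} [MetricSpace K] [CompactSpace K] [MeasurableSpace K] [BorelSpace K]
    (f : K → K) (hf : Continuous f) (μ : Measure K) [IsProbabilityMeasure μ]
    (herg : Ergodic f μ) :
    ∀ᵐ x ∂μ, ∀ φ : K → ℝ, Continuous φ →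
      Tendsto (fun n : ℕ => (∑ k ∈ Finset.range n, φ (f^[k] x)) / (n : ℝ))
        atTop (𝓝 (∫ z, φ z ∂μ)) := by
  obtain ⟨D, hDc, hDd⟩ := TopologicalSpace.exists_countable_dense C(K, ℝ)
  have hae : ∀ᵐ x ∂μ, ∀ ψ : C(K, ℝ), ψ ∈ D →
      Tendsto (fun n : ℕ => S f (⇑ψ) n x / n) atTop (𝓝 (∫ z, ψ z ∂μ)) :=
    (ae_ball_iff hDc).2 fun ψ _ => birkhoff_ae f hf μ herg ψ ψ.continuous
  filter_upwards [hae] with x hx φ hφ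
  rw [Metric.tendsto_atTop]
  intro ε hε
  set Φ : C(K, ℝ) := ⟨φ, hφ⟩ with hΦ
  obtain ⟨ψ, hψD, hψd⟩ := hDd.exists_dist_lt Φ (show 0 < ε / 3 by linarith)
  obtain ⟨N, hN⟩ := Metric.tendsto_atTop.1 (hx ψ hψD) (ε / 3) (by linarith)
  refine ⟨N, fun n hn => ?_⟩
  have hd0 : (0:ℝ) ≤ dist Φ ψ := dist_nonneg
  have happ : ∀ z : K, |φ z - ψ z| ≤ dist Φ ψ := by
    intro z
    have := ContinuousMap.dist_apply_le_dist (f := Φ) (g := ψ) z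
    rwa [Real.dist_eq] at this
  have h1 : dist (S f φ n x / n) (S f (⇑ψ) n x / n) ≤ dist Φ ψ := by
    rw [Real.dist_eq, div_sub_div_same, abs_div,
      abs_of_nonneg (Nat.cast_nonneg n : (0:ℝ) ≤ (n:ℕ))]
    have hnum : |S f φ n x - S f (⇑ψ) n x| ≤ n * dist Φ ψ := by
      have : S f φ n x - S f (⇑ψ) n x
          = ∑ k ∈ Finset.range n, (φ (f^[k] x) - ψ (f^[k] x)) := by
        rw [Finset.sum_sub_distrib]; rfl
      rw [this]
      calc |∑ k ∈ Finset.range n, (φ (f^[k] x) - ψ (f^[k] x))|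
          ≤ ∑ k ∈ Finset.range n, |φ (f^[k] x) - ψ (f^[k] x)| := Finset.abs_sum_le_sum_abs _ _
        _ ≤ (Finset.range n).card • dist Φ ψ :=
            Finset.sum_le_card_nsmul _ _ _ fun k _ => happ _
        _ = n * dist Φ ψ := by rw [Finset.card_range, nsmul_eq_mul]
    rcases Nat.eq_zero_or_pos n with rfl | hnpos
    · simpa using hd0
    · have : (0:ℝ) < n := by exact_mod_cast hnpos
      rw [div_le_iff₀ this]
      exact hnum.trans_eq (mul_comm _ _)
  have h3 : dist (∫ z, ψ z ∂μ) (∫ z, φ z ∂μ) ≤ dist Φ ψ := by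
    rw [Real.dist_eq, ← integral_sub (cont_integrable ψ.continuous) (cont_integrable hφ)]
    have := norm_integral_le_of_norm_le_const (μ := μ) (f := fun z => ψ z - φ z)
      (C := dist Φ ψ) (Eventually.of_forall fun z => by
        rw [Real.norm_eq_abs, abs_sub_comm]; exact happ z)
    simpa [measure_univ] using this
  have h2 := hN n hn
  calc dist (S f φ n x / n) (∫ z, φ z ∂μ)
      ≤ dist (S f φ n x / n) (S f (⇑ψ) n x / n) + dist (S f (⇑ψ) n x / n) (∫ z, ψ z ∂μ)
        + dist (∫ z, ψ z ∂μ) (∫ z, φ z ∂μ) := dist_triangle4 _ _ _ _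
    _ < ε := by linarith
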